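/- Let G = C_p for p prime, and let M be a dual rational coefficient system over the orbit category 𝒪_G, i.e., a covariant functor from 𝒪_G to graded ℚ-vector spaces. Then M is injective in the category Vec*_G if and only if the structure map M(G/e) → M(G/G) is surjective. -/

import Mathlib

open Function

/-- A diagram of graded `ℚ`-vector spaces over the orbit category `𝒪_{C_p}`:
a graded vector space at each of the two orbits `G/e`, `G/G`, a structure map,
and the Weyl group action of `C_p` at the level `G/e`. -/
structure CpSys (p : ℕ) where
  Me : ℕ → Type
  MG : ℕ → Type
  [iMe : ∀ n, AddCommGroup (Me n)]
  [mMe : ∀ n, Module ℚ (Me n)]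
  [iMG : ∀ n, AddCommGroup (MG n)]
  [mMG : ∀ n, Module ℚ (MG n)]
  f : ∀ n, Me n →ₗ[ℚ] MG n
  act : ∀ n, ZMod p → (Me n →ₗ[ℚ] Me n)
  act_zero : ∀ n x, act n 0 x = x
  act_add : ∀ n g h x, act n (g + h) x = act n g (act n h x)
  equiv : ∀ n g x, f n (act n g x) = f n x

attribute [instance] CpSys.iMe CpSys.mMe CpSys.iMG CpSys.mMG

/-- A morphism of diagrams over `𝒪_{C_p}`. -/
structure CpHom {p : ℕ} (X Y : CpSys p) where
  he : ∀ n, X.Me n →ₗ[ℚ] Y.Me n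
  hG : ∀ n, X.MG n →ₗ[ℚ] Y.MG n
  comm : ∀ n x, Y.f n (he n x) = hG n (X.f n x)
  act_comm : ∀ n g x, Y.act n g (he n x) = he n (X.act n g x)

/-- A morphism of diagrams is a monomorphism iff it is levelwise injective. -/
def CpHom.Mono {p : ℕ} {X Y : CpSys p} (i : CpHom X Y) : Prop :=
  (∀ n, Injective (i.he n)) ∧ (∀ n, Injective (i.hG n))

/-- Injectivity of an object of `Vec*_{C_p}`: every morphism into it extends
along every monomorphism. -/
def CpSys.InjectiveObj {p : ℕ} (I : CpSys p) : Prop :=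
  ∀ (X Y : CpSys p) (i : CpHom X Y), i.Mono → ∀ f : CpHom X I,
    ∃ g : CpHom Y I,
      (∀ n x, g.he n (i.he n x) = f.he n x) ∧
      (∀ n x, g.hG n (i.hG n x) = f.hG n x)

/-- A diagram of graded `ℚ`-vector spaces over the orbit category `𝒪_{C_{pq}}`:
graded vector spaces at the orbits `G/e`, `G/P`, `G/Q`, `G/G` (where `P`, `Q`
are the subgroups of order `p`, `q`), structure maps, and the Weyl group
actions (`G` on the `G/e` level, `G/P ≅ C_q` on the `G/P` level and
`G/Q ≅ C_p` on the `G/Q` level). -/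
structure CpqSys (p q : ℕ) where
  Me : ℕ → Type
  MP : ℕ → Type
  MQ : ℕ → Type
  MG : ℕ → Type
  [iMe : ∀ n, AddCommGroup (Me n)]
  [mMe : ∀ n, Module ℚ (Me n)]
  [iMP : ∀ n, AddCommGroup (MP n)]
  [mMP : ∀ n, Module ℚ (MP n)]
  [iMQ : ∀ n, AddCommGroup (MQ n)]
  [mMQ : ∀ n, Module ℚ (MQ n)]
  [iMG : ∀ n, AddCommGroup (MG n)]
  [mMG : ∀ n, Module ℚ (MG n)]
  fEP : ∀ n, Me n →ₗ[ℚ] MP n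
  fEQ : ∀ n, Me n →ₗ[ℚ] MQ n
  fPG : ∀ n, MP n →ₗ[ℚ] MG n
  fQG : ∀ n, MQ n →ₗ[ℚ] MG n
  comm : ∀ n x, fPG n (fEP n x) = fQG n (fEQ n x)
  acte : ∀ n, ZMod (p * q) → (Me n →ₗ[ℚ] Me n)
  actP : ∀ n, ZMod q → (MP n →ₗ[ℚ] MP n)
  actQ : ∀ n, ZMod p → (MQ n →ₗ[ℚ] MQ n)
  acte_zero : ∀ n x, acte n 0 x = x
  acte_add : ∀ n g h x, acte n (g + h) x = acte n g (acte n h x)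
  actP_zero : ∀ n x, actP n 0 x = x
  actP_add : ∀ n g h x, actP n (g + h) x = actP n g (actP n h x)
  actQ_zero : ∀ n x, actQ n 0 x = x
  actQ_add : ∀ n g h x, actQ n (g + h) x = actQ n g (actQ n h x)
  equivEP : ∀ n g x,
    fEP n (acte n g x) = actP n (ZMod.castHom (dvd_mul_left q p) (ZMod q) g) (fEP n x)
  equivEQ : ∀ n g x,
    fEQ n (acte n g x) = actQ n (ZMod.castHom (dvd_mul_right p q) (ZMod p) g) (fEQ n x)
  equivPG : ∀ n g x, fPG n (actP n g x) = fPG n x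
  equivQG : ∀ n g x, fQG n (actQ n g x) = fQG n x

attribute [instance] CpqSys.iMe CpqSys.mMe CpqSys.iMP CpqSys.mMP
attribute [instance] CpqSys.iMQ CpqSys.mMQ CpqSys.iMG CpqSys.mMG

/-- A morphism of diagrams over `𝒪_{C_{pq}}`. -/
structure CpqHom {p q : ℕ} (X Y : CpqSys p q) where
  he : ∀ n, X.Me n →ₗ[ℚ] Y.Me n
  hP : ∀ n, X.MP n →ₗ[ℚ] Y.MP n
  hQ : ∀ n, X.MQ n →ₗ[ℚ] Y.MQ n
  hG : ∀ n, X.MG n →ₗ[ℚ] Y.MG n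
  commEP : ∀ n x, Y.fEP n (he n x) = hP n (X.fEP n x)
  commEQ : ∀ n x, Y.fEQ n (he n x) = hQ n (X.fEQ n x)
  commPG : ∀ n x, Y.fPG n (hP n x) = hG n (X.fPG n x)
  commQG : ∀ n x, Y.fQG n (hQ n x) = hG n (X.fQG n x)
  acte_comm : ∀ n g x, Y.acte n g (he n x) = he n (X.acte n g x)
  actP_comm : ∀ n g x, Y.actP n g (hP n x) = hP n (X.actP n g x)
  actQ_comm : ∀ n g x, Y.actQ n g (hQ n x) = hQ n (X.actQ n g x)

/-- Levelwise injectivity (= monomorphism in the diagram category). -/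
def CpqHom.Mono {p q : ℕ} {X Y : CpqSys p q} (i : CpqHom X Y) : Prop :=
  (∀ n, Injective (i.he n)) ∧ (∀ n, Injective (i.hP n)) ∧
    (∀ n, Injective (i.hQ n)) ∧ (∀ n, Injective (i.hG n))

/-- Injectivity of an object of `Vec*_{C_{pq}}`. -/
def CpqSys.InjectiveObj {p q : ℕ} (I : CpqSys p q) : Prop :=
  ∀ (X Y : CpqSys p q) (i : CpqHom X Y), i.Mono → ∀ f : CpqHom X I,
    ∃ g : CpqHom Y I,
      (∀ n x, g.he n (i.he n x) = f.he n x) ∧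
      (∀ n x, g.hP n (i.hP n x) = f.hP n x) ∧
      (∀ n x, g.hQ n (i.hQ n x) = f.hQ n x) ∧
      (∀ n x, g.hG n (i.hG n x) = f.hG n x)

/-- **Property I**: the two structure maps into the `G/G`-level are surjective,
and the induced map from the `G/e`-level into the pullback
`𝒦 = 𝒜(G/P) ×_{𝒜(G/G)} 𝒜(G/Q)` is surjective. -/
def CpqSys.PropertyI {p q : ℕ} (A : CpqSys p q) : Prop :=
  (∀ n, Surjective (A.fPG n)) ∧ (∀ n, Surjective (A.fQG n)) ∧
    (∀ n (a : A.MP n) (b : A.MQ n), A.fPG n a = A.fQG n b →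
      ∃ x : A.Me n, A.fEP n x = a ∧ A.fEQ n x = b)
section AuxCp

variable {p : ℕ} [NeZero p]

private lemma zsum_shift {A : Type*} [AddCommMonoid A] (F : ZMod p → A) (h : ZMod p) :
    ∑ g : ZMod p, F (g + h) = ∑ g : ZMod p, F g :=
  Fintype.sum_equiv (Equiv.addRight h) _ _ (fun _ => rfl)

private lemma zsum_shiftl {A : Type*} [AddCommMonoid A] (F : ZMod p → A) (h : ZMod p) :
    ∑ g : ZMod p, F (h + g) = ∑ g : ZMod p, F g :=
  Fintype.sum_equiv (Equiv.addLeft h) _ _ (fun _ => rfl)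

private lemma pcast_ne : ((p : ℚ)) ≠ 0 := Nat.cast_ne_zero.mpr (NeZero.ne p)

private lemma avg_cancel {V : Type*} [AddCommGroup V] [Module ℚ V] (c : V) :
    (p:ℚ)⁻¹ • (∑ _g : ZMod p, c) = c := by
  rw [Finset.sum_const, Finset.card_univ, ZMod.card, ← Nat.cast_smul_eq_nsmul ℚ,
    smul_smul, inv_mul_cancel₀ (pcast_ne (p := p)), one_smul]

omit [NeZero p] in
private lemma cp_act_neg_act (Z : CpSys p) (n : ℕ) (g : ZMod p) (x : Z.Me n) :
    Z.act n (-g) (Z.act n g x) = x := by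
  rw [← Z.act_add, neg_add_cancel, Z.act_zero]

/-- The backward direction: if every structure map is surjective, the system is
an injective object. -/
private theorem cp_surj_injectiveObj (M : CpSys p) (hs : ∀ n, Surjective (M.f n)) :
    M.InjectiveObj := by
  intro X Y i hi φ
  classical
  -- a G-invariant section `s` of `M.f`
  have hsec : ∀ n, ∃ s0 : M.MG n →ₗ[ℚ] M.Me n, (M.f n) ∘ₗ s0 = LinearMap.id :=
    fun n => (M.f n).exists_rightInverse_of_surjective (LinearMap.range_eq_top.mpr (hs n))
  choose s0 hs0 using hsec
  set e0 : ∀ n, M.Me n →ₗ[ℚ] M.Me n :=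
    fun n => (p:ℚ)⁻¹ • ∑ g : ZMod p, M.act n g with he0
  have he0_apply : ∀ n (x : M.Me n), e0 n x = (p:ℚ)⁻¹ • ∑ g : ZMod p, M.act n g x := by
    intro n x
    simp [he0, LinearMap.sum_apply]
  have hfe0 : ∀ n (x : M.Me n), M.f n (e0 n x) = M.f n x := by
    intro n x
    rw [he0_apply, map_smul, map_sum]
    rw [Finset.sum_congr rfl (fun g _ => M.equiv n g x)]
    exact avg_cancel _
  have hacte0 : ∀ n h (x : M.Me n), M.act n h (e0 n x) = e0 n x := by
    intro n h x
    rw [he0_apply, map_smul, map_sum]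
    congr 1
    calc ∑ g : ZMod p, M.act n h (M.act n g x)
        = ∑ g : ZMod p, M.act n (h + g) x := by
          exact Finset.sum_congr rfl (fun g _ => (M.act_add n h g x).symm)
      _ = ∑ g : ZMod p, M.act n g x := zsum_shiftl (fun g => M.act n g x) h
  set s : ∀ n, M.MG n →ₗ[ℚ] M.Me n := fun n => (e0 n) ∘ₗ (s0 n) with hsdef
  have hfs : ∀ n (v : M.MG n), M.f n (s n v) = v := by
    intro n v
    have := LinearMap.congr_fun (hs0 n) v
    simpa [hsdef, hfe0] using this
  have hacts : ∀ n h (v : M.MG n), M.act n h (s n v) = s n v := by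
    intro n h v
    simp [hsdef, hacte0]
  -- equivariant retraction of `i.he`
  have hret : ∀ n, ∃ r : Y.Me n →ₗ[ℚ] X.Me n, r ∘ₗ (i.he n) = LinearMap.id :=
    fun n => (i.he n).exists_leftInverse_of_injective (LinearMap.ker_eq_bot.mpr (hi.1 n))
  choose r hr using hret
  have hr' : ∀ n (x : X.Me n), r n (i.he n x) = x := by
    intro n x; exact LinearMap.congr_fun (hr n) x
  set ra : ∀ n, Y.Me n →ₗ[ℚ] X.Me n :=
    fun n => (p:ℚ)⁻¹ • ∑ g : ZMod p, (X.act n (-g)) ∘ₗ (r n) ∘ₗ (Y.act n g) with hradef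
  have hra_apply : ∀ n (y : Y.Me n),
      ra n y = (p:ℚ)⁻¹ • ∑ g : ZMod p, X.act n (-g) (r n (Y.act n g y)) := by
    intro n y
    simp [hradef, LinearMap.sum_apply]
  have hra_ret : ∀ n (x : X.Me n), ra n (i.he n x) = x := by
    intro n x
    rw [hra_apply]
    have : ∀ g : ZMod p, X.act n (-g) (r n (Y.act n g (i.he n x))) = x := by
      intro g
      rw [i.act_comm, hr', cp_act_neg_act]
    rw [Finset.sum_congr rfl (fun g _ => this g)]
    exact avg_cancel _
  have hra_eq : ∀ n h (y : Y.Me n), ra n (Y.act n h y) = X.act n h (ra n y) := by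
    intro n h y
    rw [hra_apply, hra_apply, map_smul, map_sum]
    congr 1
    calc ∑ g : ZMod p, X.act n (-g) (r n (Y.act n g (Y.act n h y)))
        = ∑ g : ZMod p, X.act n (h - (g + h)) (r n (Y.act n (g + h) y)) := by
          refine Finset.sum_congr rfl (fun g _ => ?_)
          rw [← Y.act_add]
          congr 1
          ring_nf
      _ = ∑ g : ZMod p, X.act n (h - g) (r n (Y.act n g y)) :=
          zsum_shift (fun g => X.act n (h - g) (r n (Y.act n g y))) h
      _ = ∑ g : ZMod p, X.act n h (X.act n (-g) (r n (Y.act n g y))) := by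
          refine Finset.sum_congr rfl (fun g _ => ?_)
          rw [← X.act_add]
          congr 1
          ring_nf
  set α : ∀ n, Y.Me n →ₗ[ℚ] M.Me n := fun n => (φ.he n) ∘ₗ (ra n) with hαdef
  have hα_ret : ∀ n (x : X.Me n), α n (i.he n x) = φ.he n x := by
    intro n x; simp [hαdef, hra_ret]
  have hα_eq : ∀ n h (y : Y.Me n), α n (Y.act n h y) = M.act n h (α n y) := by
    intro n h y
    simp only [hαdef, LinearMap.comp_apply, hra_eq]
    rw [φ.act_comm]
  -- retraction of `i.hG`
  have hretG : ∀ n, ∃ ρ : Y.MG n →ₗ[ℚ] X.MG n, ρ ∘ₗ (i.hG n) = LinearMap.id :=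
    fun n => (i.hG n).exists_leftInverse_of_injective (LinearMap.ker_eq_bot.mpr (hi.2 n))
  choose ρ hρ using hretG
  have hρ' : ∀ n (v : X.MG n), ρ n (i.hG n v) = v := by
    intro n v; exact LinearMap.congr_fun (hρ n) v
  set β : ∀ n, Y.MG n →ₗ[ℚ] M.MG n := fun n => (φ.hG n) ∘ₗ (ρ n) with hβdef
  have hβ_ret : ∀ n (v : X.MG n), β n (i.hG n v) = φ.hG n v := by
    intro n v; simp [hβdef, hρ']
  -- the extension
  set ghe : ∀ n, Y.Me n →ₗ[ℚ] M.Me n :=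
    fun n => α n - (s n) ∘ₗ (M.f n) ∘ₗ (α n) + (s n) ∘ₗ (β n) ∘ₗ (Y.f n) with ghedef
  have ghe_apply : ∀ n (y : Y.Me n),
      ghe n y = α n y - s n (M.f n (α n y)) + s n (β n (Y.f n y)) := by
    intro n y; simp [ghedef]
  refine ⟨⟨ghe, β, ?_, ?_⟩, ?_, ?_⟩
  · -- comm
    intro n y
    rw [ghe_apply]
    simp only [map_add, map_sub, hfs]
    abel
  · -- act_comm
    intro n g y
    rw [ghe_apply, ghe_apply]
    simp only [map_add, map_sub, hacts, hα_eq, hfe0]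
    rw [M.equiv, Y.equiv]
  · -- extension at level e
    intro n x
    rw [ghe_apply, hα_ret, i.comm, hβ_ret, ← φ.comm]
    abel
  · -- extension at level G
    intro n v
    exact hβ_ret n v

end AuxCp

/-- For `G = C_p` (`p` prime), a dual rational coefficient
system `M` over the orbit category `𝒪_G` is injective in `Vec*_G` if and only
if the structure map `M(G/e) → M(G/G)` is surjective. -/
theorem cp_injective_iff_surjective {p : ℕ} (hp : p.Prime) (M : CpSys p) :
    M.InjectiveObj ↔ ∀ n, Function.Surjective (M.f n) := by
  haveI : NeZero p := ⟨hp.ne_zero⟩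
  constructor
  · -- injective ⟹ surjective
    intro hInj n v
    -- enlarge `M` by freely adding `M.MG` to the `G/e`-level
    set Y : CpSys p :=
      { Me := fun m => M.Me m × M.MG m
        MG := M.MG
        f := fun m => (M.f m).coprod LinearMap.id
        act := fun m g => (M.act m g).prodMap LinearMap.id
        act_zero := by
          intro m x
          simp [M.act_zero]
        act_add := by
          intro m g h x
          simp [M.act_add]
        equiv := by
          intro m g x
          simp [M.equiv] } with hY
    have hYf : ∀ m (x : M.Me m × M.MG m), Y.f m x = M.f m x.1 + x.2 := fun m x => rfl
    set i : CpHom M Y :=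
      { he := fun m => LinearMap.prod LinearMap.id 0
        hG := fun m => LinearMap.id
        comm := by
          intro m x
          show Y.f m (x, 0) = M.f m x
          rw [hYf]; simp
        act_comm := by
          intro m g x
          rfl } with hi
    have hmono : i.Mono := by
      constructor
      · intro m a b h
        exact congrArg Prod.fst h
      · intro m a b h
        simpa [hi] using h
    set φ : CpHom M M :=
      { he := fun m => LinearMap.id
        hG := fun m => LinearMap.id
        comm := fun m x => rfl
        act_comm := fun m g x => rfl } with hφ
    obtain ⟨g, hge, hgG⟩ := hInj M Y i hmono φ
    refine ⟨g.he n (0, v), ?_⟩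
    have h1 : M.f n (g.he n (0, v)) = g.hG n (Y.f n (0, v)) := g.comm n (0, v)
    have h2 : Y.f n ((0, v) : M.Me n × M.MG n) = v := by
      rw [hYf]; simp
    have h3 : g.hG n v = v := by
      have := hgG n v
      simpa [hi, hφ] using this
    rw [h1, h2, h3]
  · intro hs
    exact cp_surj_injectiveObj M hs
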